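/- (Corollary 6.11) Let ξ = exp(iπ/5) ∈ ℂ, τ = (1+√5)/2 and τ' = 1 - τ. For every integer n ≥ 3, there do not exist a bounded interval Ω ⊆ ℝ and a bounded interval I ⊆ ℝ such that L(n) = {p + qτ : p, q ∈ ℤ, p + qτ' ∈ Ω} ∩ I. That is, L(n) does not correspond to (a fragment of) a cut-and-project quasicrystal with connected acceptance window for n ≥ 3. -/

import Mathlib

noncomputable def tau : ℝ := (1 + Real.sqrt 5) / 2

noncomputable def tau' : ℝ := 1 - tau

/-- ξ = exp(iπ/5), a primitive 10th root of unity. -/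
noncomputable def xi : ℂ := Complex.exp (Real.pi * Complex.I / 5)

/-- L(n): the real points of the quasicrystal fragment Q₂(n). -/
noncomputable def L (n : ℕ) : Set ℝ :=
  {x : ℝ | ∃ m : Fin 10 → ℕ, (∑ j, m j) ≤ n ∧ (x : ℂ) = ∑ j, (m j : ℂ) * xi ^ (j : ℕ)}

lemma my_sum_univ_ten {M : Type*} [AddCommMonoid M] (f : Fin 10 → M) :
    ∑ i, f i = f 0 + f 1 + f 2 + f 3 + f 4 + f 5 + f 6 + f 7 + f 8 + f 9 := by
  rw [Fin.sum_univ_castSucc, Fin.sum_univ_castSucc, Fin.sum_univ_eight]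
  rfl

lemma sqrt5_coeffs (a b : ℤ) (h : (a:ℝ) + (b:ℝ) * Real.sqrt 5 = 0) : a = 0 ∧ b = 0 := by
  have h5 : Irrational (Real.sqrt 5) := by
    simpa using (by norm_num : Nat.Prime 5).irrational_sqrt
  by_cases hb : b = 0
  · subst hb
    simp at h
    exact ⟨by exact_mod_cast h, rfl⟩
  · exfalso
    apply h5
    refine ⟨(-a : ℚ)/b, ?_⟩
    have hb' : (b:ℝ) ≠ 0 := Int.cast_ne_zero.mpr hb
    push_cast
    field_simp
    linarith

lemma tau_eq_int {p q k : ℤ} (h : (p:ℝ) + (q:ℝ) * tau = (k:ℝ)) : p = k ∧ q = 0 := by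
  rw [tau] at h
  obtain ⟨h1, h2⟩ := sqrt5_coeffs (2*p + q - 2*k) q (by push_cast; linarith)
  omega

lemma xi_pow_re (j : ℕ) : (xi ^ j).re = Real.cos (j * Real.pi / 5) := by
  rw [xi, ← Complex.exp_nat_mul]
  have h : (j:ℂ) * (↑Real.pi * Complex.I / 5) = ↑((j:ℝ) * Real.pi / 5) * Complex.I := by
    push_cast; ring
  rw [h, Complex.exp_ofReal_mul_I_re]

lemma cos_two_pi_div_five : Real.cos (2 * Real.pi / 5) = (Real.sqrt 5 - 1) / 4 := by
  have h : 2 * Real.pi / 5 = 2 * (Real.pi / 5) := by ring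
  rw [h, Real.cos_two_mul, Real.cos_pi_div_five]
  nlinarith [Real.sq_sqrt (show (0:ℝ) ≤ 5 by norm_num)]

lemma xire0 : (xi ^ 0).re = 1 := by rw [xi_pow_re]; norm_num
lemma xire1 : (xi ^ 1).re = (1 + Real.sqrt 5) / 4 := by
  rw [xi_pow_re]; norm_num [Real.cos_pi_div_five]
lemma xire2 : (xi ^ 2).re = (Real.sqrt 5 - 1) / 4 := by
  rw [xi_pow_re]; norm_num [cos_two_pi_div_five]
lemma xire3 : (xi ^ 3).re = -((Real.sqrt 5 - 1) / 4) := by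
  rw [xi_pow_re]
  have h : (3:ℕ) * Real.pi / 5 = Real.pi - 2 * Real.pi / 5 := by push_cast; ring
  rw [h, Real.cos_pi_sub, cos_two_pi_div_five]
lemma xire4 : (xi ^ 4).re = -((1 + Real.sqrt 5) / 4) := by
  rw [xi_pow_re]
  have h : (4:ℕ) * Real.pi / 5 = Real.pi - Real.pi / 5 := by push_cast; ring
  rw [h, Real.cos_pi_sub, Real.cos_pi_div_five]
lemma xire5 : (xi ^ 5).re = -1 := by
  rw [xi_pow_re]
  have h : (5:ℕ) * Real.pi / 5 = Real.pi := by push_cast; ring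
  rw [h, Real.cos_pi]
lemma xire6 : (xi ^ 6).re = -((1 + Real.sqrt 5) / 4) := by
  rw [xi_pow_re]
  have h : (6:ℕ) * Real.pi / 5 = 2 * Real.pi - (Real.pi - Real.pi / 5) := by push_cast; ring
  rw [h, Real.cos_two_pi_sub, Real.cos_pi_sub, Real.cos_pi_div_five]
lemma xire7 : (xi ^ 7).re = -((Real.sqrt 5 - 1) / 4) := by
  rw [xi_pow_re]
  have h : (7:ℕ) * Real.pi / 5 = 2 * Real.pi - (Real.pi - 2 * Real.pi / 5) := by push_cast; ring
  rw [h, Real.cos_two_pi_sub, Real.cos_pi_sub, cos_two_pi_div_five]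
lemma xire8 : (xi ^ 8).re = (Real.sqrt 5 - 1) / 4 := by
  rw [xi_pow_re]
  have h : (8:ℕ) * Real.pi / 5 = 2 * Real.pi - 2 * Real.pi / 5 := by push_cast; ring
  rw [h, Real.cos_two_pi_sub, cos_two_pi_div_five]
lemma xire9 : (xi ^ 9).re = (1 + Real.sqrt 5) / 4 := by
  rw [xi_pow_re]
  have h : (9:ℕ) * Real.pi / 5 = 2 * Real.pi - Real.pi / 5 := by push_cast; ring
  rw [h, Real.cos_two_pi_sub, Real.cos_pi_div_five]

lemma xi_pow_five : xi ^ 5 = -1 := by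
  rw [xi, ← Complex.exp_nat_mul]
  rw [show (5:ℕ) * (↑Real.pi * Complex.I / 5) = ↑Real.pi * Complex.I by push_cast; ring]
  exact Complex.exp_pi_mul_I

lemma nat_mem_L (n : ℕ) : ((n:ℝ)) ∈ L n := by
  refine ⟨fun j => if j = 0 then n else 0, ?_, ?_⟩
  · rw [my_sum_univ_ten]; simp +decide
  · rw [my_sum_univ_ten]; simp +decide

lemma neg_nat_mem_L (n : ℕ) : (-(n:ℝ)) ∈ L n := by
  refine ⟨fun j => if j = 5 then n else 0, ?_, ?_⟩
  · rw [my_sum_univ_ten]; simp +decide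
  · rw [my_sum_univ_ten]
    simp +decide
    rw [xi_pow_five]
    ring

lemma not_mem_L (n : ℕ) (p q : ℤ) (hq : (n:ℤ) < 2*q) :
    ((p:ℝ) + (q:ℝ) * tau) ∉ L n := by
  rintro ⟨m, hsum, hz⟩
  rw [my_sum_univ_ten] at hz hsum
  rw [show ((0:Fin 10):ℕ) = 0 from rfl, show ((1:Fin 10):ℕ) = 1 from rfl,
    show ((2:Fin 10):ℕ) = 2 from rfl, show ((3:Fin 10):ℕ) = 3 from rfl,
    show ((4:Fin 10):ℕ) = 4 from rfl, show ((5:Fin 10):ℕ) = 5 from rfl,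
    show ((6:Fin 10):ℕ) = 6 from rfl, show ((7:Fin 10):ℕ) = 7 from rfl,
    show ((8:Fin 10):ℕ) = 8 from rfl, show ((9:Fin 10):ℕ) = 9 from rfl] at hz
  have hre := congrArg Complex.re hz
  simp only [Complex.add_re, Complex.mul_re, Complex.ofReal_re, Complex.natCast_re,
    Complex.natCast_im, zero_mul, sub_zero, xire0, xire1, xire2, xire3, xire4, xire5,
    xire6, xire7, xire8, xire9] at hre
  rw [tau] at hre
  obtain ⟨-, hB⟩ := sqrt5_coeffs
    (4*p + 2*q - 4*(m 0) + 4*(m 5) - (m 1) - (m 9) + (m 4) + (m 6) + (m 2) + (m 8)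
      - (m 3) - (m 7))
    (2*q - (m 1) - (m 9) + (m 4) + (m 6) - (m 2) - (m 8) + (m 3) + (m 7))
    (by push_cast; linear_combination (4:ℝ) * hre)
  omega

/-- Corollary 6.11: for n ≥ 3, L(n) is not the intersection of a cut-and-project
quasicrystal with connected (i.e. convex) bounded acceptance window with a bounded
interval. -/
theorem L_not_cut_and_project (n : ℕ) (hn : 3 ≤ n) :
    ¬ ∃ Ω I : Set ℝ, Bornology.IsBounded Ω ∧ Convex ℝ Ω ∧
      Bornology.IsBounded I ∧ Convex ℝ I ∧
      L n = {x : ℝ | ∃ p q : ℤ, x = (p : ℝ) + (q : ℝ) * tau ∧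
        (p : ℝ) + (q : ℝ) * tau' ∈ Ω} ∩ I := by
  rintro ⟨Ω, I, -, hΩc, -, hIc, hEq⟩
  have hmemN : ((n:ℝ)) ∈ L n := nat_mem_L n
  have hmemN' : (-(n:ℝ)) ∈ L n := neg_nat_mem_L n
  rw [hEq] at hmemN hmemN'
  obtain ⟨⟨p1, q1, hpq1, hΩ1⟩, hI1⟩ := hmemN
  obtain ⟨⟨p2, q2, hpq2, hΩ2⟩, hI2⟩ := hmemN'
  obtain ⟨hp1, hq1⟩ := tau_eq_int (p := p1) (q := q1) (k := (n:ℤ))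
    (by rw [← hpq1]; push_cast; ring)
  obtain ⟨hp2, hq2⟩ := tau_eq_int (p := p2) (q := q2) (k := -(n:ℤ))
    (by rw [← hpq2]; push_cast; ring)
  subst hp1 hq1 hp2 hq2
  push_cast at hΩ1 hΩ2
  simp only [mul_zero, zero_mul, add_zero] at hΩ1 hΩ2
  have hΩIcc : Set.Icc (-(n:ℝ)) n ⊆ Ω := hΩc.ordConnected.out hΩ2 hΩ1
  have hIIcc : Set.Icc (-(n:ℝ)) n ⊆ I := hIc.ordConnected.out hI2 hI1
  -- the missing point
  set q0 : ℤ := (n:ℤ)/2 + 1 with hq0def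
  set p0 : ℤ := -((q0+1)/2) with hp0def
  have h2q : (n:ℤ) < 2*q0 := by omega
  have hq2 : 2 ≤ q0 := by omega
  have hpqU : 2*p0 + q0 ≤ 0 := by omega
  have hpqL : -1 ≤ 2*p0 + q0 := by omega
  have hcase : 2*q0 = (n:ℤ)+1 ∨ (2*q0 = (n:ℤ)+2 ∧ 4 ≤ (n:ℤ)) := by omega
  have hsq : 5*q0^2 ≤ (2*(n:ℤ)-1)^2 := by
    rcases hcase with h | ⟨h, h4⟩ <;> nlinarith
  have hsqR : 5*(q0:ℝ)^2 ≤ (2*(n:ℝ)-1)^2 := by exact_mod_cast hsq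
  have hs0 : (0:ℝ) ≤ Real.sqrt 5 := Real.sqrt_nonneg 5
  have hs2 : Real.sqrt 5 ^ 2 = 5 := Real.sq_sqrt (by norm_num)
  have hq0R : (2:ℝ) ≤ (q0:ℝ) := by exact_mod_cast hq2
  have hnR : (3:ℝ) ≤ (n:ℝ) := by exact_mod_cast hn
  have hqs0 : (0:ℝ) ≤ (q0:ℝ) * Real.sqrt 5 := mul_nonneg (by linarith) hs0
  have hqs : (q0:ℝ) * Real.sqrt 5 ≤ 2*(n:ℝ) - 1 := by
    nlinarith [hsqR, hs2, hs0, hqs0, hq0R, hnR]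
  have hpU : ((2*p0 + q0 : ℤ):ℝ) ≤ 0 := by exact_mod_cast hpqU
  have hpL : (-1:ℝ) ≤ ((2*p0 + q0 : ℤ):ℝ) := by exact_mod_cast hpqL
  push_cast at hpU hpL
  have hzI : (p0:ℝ) + (q0:ℝ) * tau ∈ Set.Icc (-(n:ℝ)) n := by
    rw [tau]
    constructor <;> [nlinarith [hqs0, hqs, hpL, hpU, hnR]; nlinarith [hqs0, hqs, hpL, hpU, hnR]]
  have hzΩ : (p0:ℝ) + (q0:ℝ) * tau' ∈ Set.Icc (-(n:ℝ)) n := by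
    rw [tau', tau]
    constructor <;> [nlinarith [hqs0, hqs, hpL, hpU, hnR]; nlinarith [hqs0, hqs, hpL, hpU, hnR]]
  have hmem : ((p0:ℝ) + (q0:ℝ) * tau) ∈ L n := by
    rw [hEq]
    exact ⟨⟨p0, q0, rfl, hΩIcc hzΩ⟩, hIIcc hzI⟩
  exact not_mem_L n p0 q0 h2q hmem
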